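/- Let γ > 0 and let W be a row-stochastic DiKernel with W(x,y) ≥ γ for all x,y ∈ [0,1]. Then there exists a measurable function h : [0,1] → ℝ₊ with ∫₀¹ h(y)dy = 1 and constants α ≥ 0, ρ ∈ [0,1) such that for every initial opinion f₀ : [0,1] → [-1,1], setting f* = ∫₀¹ h(y)f₀(y)dy, one has sup_{x∈[0,1]} |fₜ(x) − f*| ≤ αρᵗ for all t, where fₜ = Tᵗ(W)f₀. In particular the opinions converge uniformly to the constant consensus f*. -/

import Mathlib

open MeasureTheory Set

noncomputable def Tk (W : ℝ → ℝ → ℝ) (f : ℝ → ℝ) : ℝ → ℝ :=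
  fun x => ∫ y in Icc (0:ℝ) 1, W x y * f y

noncomputable def L1norm (f : ℝ → ℝ) : ℝ :=
  ∫ x in Icc (0:ℝ) 1, |f x|

noncomputable def cutNorm (U : ℝ → ℝ → ℝ) : ℝ :=
  ⨆ p : {p : Set ℝ × Set ℝ // MeasurableSet p.1 ∧ MeasurableSet p.2},
    |∫ x in p.1.1 ∩ Icc (0:ℝ) 1, ∫ y in p.1.2 ∩ Icc (0:ℝ) 1, U x y|

namespace Stmt13

open Filter Topology Function

noncomputable def muI : Measure ℝ := volume.restrict (Icc (0:ℝ) 1)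

instance : IsProbabilityMeasure muI := by
  constructor
  rw [muI, Measure.restrict_apply_univ, Real.volume_Icc]
  norm_num

lemma ae_memI : ∀ᵐ x ∂muI, x ∈ Icc (0:ℝ) 1 := ae_restrict_mem measurableSet_Icc

lemma ae_memI2 : ∀ᵐ p : ℝ × ℝ ∂(muI.prod muI), p.1 ∈ Icc (0:ℝ) 1 ∧ p.2 ∈ Icc (0:ℝ) 1 := by
  have : muI.prod muI = (volume.prod volume).restrict ((Icc (0:ℝ) 1) ×ˢ (Icc (0:ℝ) 1)) := by
    rw [muI, Measure.prod_restrict]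
  rw [this]
  filter_upwards [ae_restrict_mem (measurableSet_Icc.prod measurableSet_Icc)] with p hp
  exact hp

lemma intg {f : ℝ → ℝ} {C : ℝ} (hf : Measurable f) (hC : ∀ x ∈ Icc (0:ℝ) 1, |f x| ≤ C) :
    Integrable f muI := by
  refine Integrable.mono' (integrable_const C) hf.aestronglyMeasurable ?_
  filter_upwards [ae_memI] with x hx
  simpa using hC x hx

lemma zero_memI : (0:ℝ) ∈ Icc (0:ℝ) 1 := ⟨le_refl _, zero_le_one⟩

lemma measW1 {W : ℝ → ℝ → ℝ} (hW : Measurable (uncurry W)) (x : ℝ) :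
    Measurable (fun y => W x y) :=
  hW.comp (measurable_const.prodMk measurable_id)

lemma measW2 {W : ℝ → ℝ → ℝ} (hW : Measurable (uncurry W)) (y : ℝ) :
    Measurable (fun x => W x y) :=
  hW.comp (measurable_id.prodMk measurable_const)

noncomputable def Sa (W : ℝ → ℝ → ℝ) (g : ℝ → ℝ) : ℝ → ℝ := fun y => ∫ x, g x * W x y ∂muI

lemma Tk_eq (W : ℝ → ℝ → ℝ) (f : ℝ → ℝ) (x : ℝ) : Tk W f x = ∫ y, W x y * f y ∂muI := rfl

lemma Tk_meas {W : ℝ → ℝ → ℝ} (hW : Measurable (uncurry W)) {f : ℝ → ℝ} (hf : Measurable f) :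
    Measurable (Tk W f) := by
  have : StronglyMeasurable (Function.uncurry (fun x y => W x y * f y)) :=
    (hW.mul (hf.comp measurable_snd)).stronglyMeasurable
  exact this.integral_prod_right.measurable

lemma Sa_meas {W : ℝ → ℝ → ℝ} (hW : Measurable (uncurry W)) {g : ℝ → ℝ} (hg : Measurable g) :
    Measurable (Sa W g) := by
  have : StronglyMeasurable (Function.uncurry (fun y x => g x * W x y)) :=
    ((hg.comp measurable_snd).mul (hW.comp measurable_swap)).stronglyMeasurable
  exact this.integral_prod_right.measurable

lemma swapI {F : ℝ → ℝ → ℝ} (hF : Measurable (uncurry F)) {C : ℝ}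
    (hC : ∀ x ∈ Icc (0:ℝ) 1, ∀ y ∈ Icc (0:ℝ) 1, |F x y| ≤ C) :
    ∫ x, ∫ y, F x y ∂muI ∂muI = ∫ y, ∫ x, F x y ∂muI ∂muI := by
  apply MeasureTheory.integral_integral_swap
  refine Integrable.mono' (integrable_const C) hF.aestronglyMeasurable ?_
  filter_upwards [ae_memI2] with p hp
  simpa [Function.uncurry] using hC p.1 hp.1 p.2 hp.2

section
variable {M γ : ℝ} {W : ℝ → ℝ → ℝ}

lemma intgW (hW : Measurable (uncurry W))
    (hWM : ∀ x ∈ Icc (0:ℝ) 1, ∀ y ∈ Icc (0:ℝ) 1, W x y ∈ Icc (0:ℝ) M)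
    {x : ℝ} (hx : x ∈ Icc (0:ℝ) 1) : Integrable (fun y => W x y) muI := by
  refine intg (C := M) (measW1 hW x) (fun y hy => ?_)
  have := hWM x hx y hy
  rw [abs_of_nonneg this.1]; exact this.2

lemma intgW' (hW : Measurable (uncurry W))
    (hWM : ∀ x ∈ Icc (0:ℝ) 1, ∀ y ∈ Icc (0:ℝ) 1, W x y ∈ Icc (0:ℝ) M)
    {y : ℝ} (hy : y ∈ Icc (0:ℝ) 1) : Integrable (fun x => W x y) muI := by
  refine intg (C := M) (measW2 hW y) (fun x hx => ?_)
  have := hWM x hx y hy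
  rw [abs_of_nonneg this.1]; exact this.2

lemma gamma_le_one (hW : Measurable (uncurry W))
    (hWM : ∀ x ∈ Icc (0:ℝ) 1, ∀ y ∈ Icc (0:ℝ) 1, W x y ∈ Icc (0:ℝ) M)
    (hmix : ∀ x ∈ Icc (0:ℝ) 1, ∀ y ∈ Icc (0:ℝ) 1, γ ≤ W x y)
    (hWrow : ∀ x ∈ Icc (0:ℝ) 1, (∫ y, W x y ∂muI) = 1) : γ ≤ 1 := by
  have : (∫ _y, γ ∂muI) ≤ ∫ y, W 0 y ∂muI := by
    refine integral_mono_ae (integrable_const γ) (intgW hW hWM zero_memI) ?_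
    filter_upwards [ae_memI] with y hy
    exact hmix 0 zero_memI y hy
  rw [hWrow 0 zero_memI] at this
  simpa using this

lemma M_nonneg (hWM : ∀ x ∈ Icc (0:ℝ) 1, ∀ y ∈ Icc (0:ℝ) 1, W x y ∈ Icc (0:ℝ) M) :
    0 ≤ M :=
  le_trans (hWM 0 zero_memI 0 zero_memI).1 (hWM 0 zero_memI 0 zero_memI).2

lemma Tk_mem_Icc (hW : Measurable (uncurry W))
    (hWM : ∀ x ∈ Icc (0:ℝ) 1, ∀ y ∈ Icc (0:ℝ) 1, W x y ∈ Icc (0:ℝ) M)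
    (hWrow : ∀ x ∈ Icc (0:ℝ) 1, (∫ y, W x y ∂muI) = 1)
    {f : ℝ → ℝ} {a b : ℝ} (hf : Measurable f)
    (hfb : ∀ y ∈ Icc (0:ℝ) 1, f y ∈ Icc a b) :
    ∀ x ∈ Icc (0:ℝ) 1, Tk W f x ∈ Icc a b := by
  intro x hx
  have hint : Integrable (fun y => W x y * f y) muI := by
    refine intg (C := M * (|a| + |b|)) ((measW1 hW x).mul hf) (fun y hy => ?_)
    rw [abs_mul]
    refine mul_le_mul ?_ ?_ (abs_nonneg _) ?_
    · rw [abs_of_nonneg (hWM x hx y hy).1]; exact (hWM x hx y hy).2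
    · have h1 := (hfb y hy).1; have h2 := (hfb y hy).2
      rcases abs_cases (f y) with ⟨he, _⟩ | ⟨he, _⟩ <;> rcases abs_cases a with ⟨ha,_⟩|⟨ha,_⟩ <;>
        rcases abs_cases b with ⟨hb,_⟩|⟨hb,_⟩ <;> linarith
    · have := abs_nonneg a; have := abs_nonneg b
      have := (hWM x hx y hy).1; have := (hWM x hx y hy).2; linarith
  constructor
  · have : (∫ y, W x y * a ∂muI) ≤ ∫ y, W x y * f y ∂muI := by
      refine integral_mono_ae ((intgW hW hWM hx).mul_const a) hint ?_
      filter_upwards [ae_memI] with y hy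
      exact mul_le_mul_of_nonneg_left (hfb y hy).1 (hWM x hx y hy).1
    rw [integral_mul_const, hWrow x hx, one_mul] at this
    exact this
  · have : (∫ y, W x y * f y ∂muI) ≤ ∫ y, W x y * b ∂muI := by
      refine integral_mono_ae hint ((intgW hW hWM hx).mul_const b) ?_
      filter_upwards [ae_memI] with y hy
      exact mul_le_mul_of_nonneg_left (hfb y hy).2 (hWM x hx y hy).1
    rw [integral_mul_const, hWrow x hx, one_mul] at this
    exact this

lemma Tk_upper (hγ : 0 < γ) (hW : Measurable (uncurry W))
    (hWM : ∀ x ∈ Icc (0:ℝ) 1, ∀ y ∈ Icc (0:ℝ) 1, W x y ∈ Icc (0:ℝ) M)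
    (hmix : ∀ x ∈ Icc (0:ℝ) 1, ∀ y ∈ Icc (0:ℝ) 1, γ ≤ W x y)
    (hWrow : ∀ x ∈ Icc (0:ℝ) 1, (∫ y, W x y ∂muI) = 1)
    {g : ℝ → ℝ} (hg : Measurable g) (hgb : ∀ y ∈ Icc (0:ℝ) 1, g y ∈ Icc (-1:ℝ) 1) :
    ∀ x ∈ Icc (0:ℝ) 1,
      Tk W g x ≤ (γ/2) * (∫ z, g z ∂muI) + (1 - γ/2) * sSup (g '' Icc (0:ℝ) 1) := by
  intro x hx
  set s := sSup (g '' Icc (0:ℝ) 1) with hs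
  have hbdd : BddAbove (g '' Icc (0:ℝ) 1) := ⟨1, by rintro _ ⟨y, hy, rfl⟩; exact (hgb y hy).2⟩
  have hle : ∀ y ∈ Icc (0:ℝ) 1, g y ≤ s := fun y hy => le_csSup hbdd ⟨y, hy, rfl⟩
  have hgb' : ∀ y ∈ Icc (0:ℝ) 1, |g y| ≤ 1 := fun y hy => abs_le.2 ⟨(hgb y hy).1, (hgb y hy).2⟩
  have h1 : Integrable (fun y => (W x y - γ/2) * g y) muI := by
    refine intg (C := (M + γ/2) * 1) (((measW1 hW x).sub measurable_const).mul hg)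
      (fun y hy => ?_)
    rw [abs_mul]
    have h1 := (hWM x hx y hy).1; have h2 := (hWM x hx y hy).2
    refine mul_le_mul ?_ (hgb' y hy) (abs_nonneg _) (by linarith)
    rcases abs_cases (W x y - γ/2) with ⟨he,_⟩|⟨he,_⟩ <;> linarith
  have h2 : Integrable (fun y => (γ/2) * g y) muI := (intg hg hgb').const_mul _
  have hsplit : Tk W g x = (∫ y, (W x y - γ/2) * g y ∂muI) + (γ/2) * ∫ z, g z ∂muI := by
    rw [Tk_eq, ← integral_const_mul, ← integral_add h1 h2]
    congr 1; funext y; ring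
  have hmono : (∫ y, (W x y - γ/2) * g y ∂muI) ≤ ∫ y, (W x y - γ/2) * s ∂muI := by
    refine integral_mono_ae h1 (((intgW hW hWM hx).sub (integrable_const _)).mul_const s) ?_
    filter_upwards [ae_memI] with y hy
    refine mul_le_mul_of_nonneg_left (hle y hy) ?_
    have := hmix x hx y hy; linarith
  have hval : (∫ y, (W x y - γ/2) * s ∂muI) = (1 - γ/2) * s := by
    rw [integral_mul_const, integral_sub (intgW hW hWM hx) (integrable_const _),
      hWrow x hx, integral_const]
    simp [mul_comm]
  rw [hsplit]; rw [hval] at hmono; linarith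

lemma Tk_lower (hγ : 0 < γ) (hW : Measurable (uncurry W))
    (hWM : ∀ x ∈ Icc (0:ℝ) 1, ∀ y ∈ Icc (0:ℝ) 1, W x y ∈ Icc (0:ℝ) M)
    (hmix : ∀ x ∈ Icc (0:ℝ) 1, ∀ y ∈ Icc (0:ℝ) 1, γ ≤ W x y)
    (hWrow : ∀ x ∈ Icc (0:ℝ) 1, (∫ y, W x y ∂muI) = 1)
    {g : ℝ → ℝ} (hg : Measurable g) (hgb : ∀ y ∈ Icc (0:ℝ) 1, g y ∈ Icc (-1:ℝ) 1) :
    ∀ x ∈ Icc (0:ℝ) 1,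
      (γ/2) * (∫ z, g z ∂muI) + (1 - γ/2) * sInf (g '' Icc (0:ℝ) 1) ≤ Tk W g x := by
  intro x hx
  set s := sInf (g '' Icc (0:ℝ) 1) with hs
  have hbdd : BddBelow (g '' Icc (0:ℝ) 1) := ⟨-1, by rintro _ ⟨y, hy, rfl⟩; exact (hgb y hy).1⟩
  have hle : ∀ y ∈ Icc (0:ℝ) 1, s ≤ g y := fun y hy => csInf_le hbdd ⟨y, hy, rfl⟩
  have hgb' : ∀ y ∈ Icc (0:ℝ) 1, |g y| ≤ 1 := fun y hy => abs_le.2 ⟨(hgb y hy).1, (hgb y hy).2⟩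
  have h1 : Integrable (fun y => (W x y - γ/2) * g y) muI := by
    refine intg (C := (M + γ/2) * 1) (((measW1 hW x).sub measurable_const).mul hg)
      (fun y hy => ?_)
    rw [abs_mul]
    have h1 := (hWM x hx y hy).1; have h2 := (hWM x hx y hy).2
    refine mul_le_mul ?_ (hgb' y hy) (abs_nonneg _) (by linarith)
    rcases abs_cases (W x y - γ/2) with ⟨he,_⟩|⟨he,_⟩ <;> linarith
  have h2 : Integrable (fun y => (γ/2) * g y) muI := (intg hg hgb').const_mul _
  have hsplit : Tk W g x = (∫ y, (W x y - γ/2) * g y ∂muI) + (γ/2) * ∫ z, g z ∂muI := by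
    rw [Tk_eq, ← integral_const_mul, ← integral_add h1 h2]
    congr 1; funext y; ring
  have hmono : (∫ y, (W x y - γ/2) * s ∂muI) ≤ ∫ y, (W x y - γ/2) * g y ∂muI := by
    refine integral_mono_ae (((intgW hW hWM hx).sub (integrable_const _)).mul_const s) h1 ?_
    filter_upwards [ae_memI] with y hy
    refine mul_le_mul_of_nonneg_left (hle y hy) ?_
    have := hmix x hx y hy; linarith
  have hval : (∫ y, (W x y - γ/2) * s ∂muI) = (1 - γ/2) * s := by
    rw [integral_mul_const, integral_sub (intgW hW hWM hx) (integrable_const _),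
      hWrow x hx, integral_const]
    simp [mul_comm]
  rw [hsplit]; rw [hval] at hmono; linarith

lemma Tk_iter (hW : Measurable (uncurry W))
    (hWM : ∀ x ∈ Icc (0:ℝ) 1, ∀ y ∈ Icc (0:ℝ) 1, W x y ∈ Icc (0:ℝ) M)
    (hWrow : ∀ x ∈ Icc (0:ℝ) 1, (∫ y, W x y ∂muI) = 1)
    {f : ℝ → ℝ} {a b : ℝ} (hf : Measurable f) (hfb : ∀ y ∈ Icc (0:ℝ) 1, f y ∈ Icc a b) :
    ∀ t, Measurable ((Tk W)^[t] f) ∧ ∀ x ∈ Icc (0:ℝ) 1, (Tk W)^[t] f x ∈ Icc a b := by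
  intro t
  induction t with
  | zero => exact ⟨hf, hfb⟩
  | succ t ih =>
    rw [Function.iterate_succ_apply']
    exact ⟨Tk_meas hW ih.1, Tk_mem_Icc hW hWM hWrow ih.1 ih.2⟩

lemma Sa_bound (hW : Measurable (uncurry W))
    (hWM : ∀ x ∈ Icc (0:ℝ) 1, ∀ y ∈ Icc (0:ℝ) 1, W x y ∈ Icc (0:ℝ) M)
    {g : ℝ → ℝ} {C : ℝ} (hg : Measurable g) (hgC : ∀ x ∈ Icc (0:ℝ) 1, |g x| ≤ C) :
    ∀ y ∈ Icc (0:ℝ) 1, |Sa W g y| ≤ C * M := by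
  intro y hy
  have hC0 : 0 ≤ C := le_trans (abs_nonneg _) (hgC 0 zero_memI)
  have hb : ∀ x ∈ Icc (0:ℝ) 1, |g x * W x y| ≤ C * M := by
    intro x hx
    rw [abs_mul]
    refine mul_le_mul (hgC x hx) ?_ (abs_nonneg _) hC0
    rw [abs_of_nonneg (hWM x hx y hy).1]; exact (hWM x hx y hy).2
  have h1 : |Sa W g y| ≤ ∫ x, |g x * W x y| ∂muI := by
    rw [Sa]
    simpa only [Real.norm_eq_abs] using
      norm_integral_le_integral_norm (μ := muI) (fun x => g x * W x y)
  refine le_trans h1 (le_trans (integral_mono_ae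
    ((intg (hg.mul (measW2 hW y)) hb).abs) (integrable_const (C * M)) ?_) ?_)
  · filter_upwards [ae_memI] with x hx
    simpa [abs_abs] using hb x hx
  · simp

lemma dual_one (hW : Measurable (uncurry W))
    (hWM : ∀ x ∈ Icc (0:ℝ) 1, ∀ y ∈ Icc (0:ℝ) 1, W x y ∈ Icc (0:ℝ) M)
    {g f : ℝ → ℝ} {C₁ C₂ : ℝ} (hg : Measurable g) (hgC : ∀ x ∈ Icc (0:ℝ) 1, |g x| ≤ C₁)
    (hf : Measurable f) (hfC : ∀ x ∈ Icc (0:ℝ) 1, |f x| ≤ C₂) :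
    ∫ y, Sa W g y * f y ∂muI = ∫ x, g x * Tk W f x ∂muI := by
  have hC₁ : 0 ≤ C₁ := le_trans (abs_nonneg _) (hgC 0 zero_memI)
  have e1 : (fun y => Sa W g y * f y) = fun y => ∫ x, g x * W x y * f y ∂muI := by
    funext y
    exact (integral_mul_const (f y) (fun x => g x * W x y)).symm
  have e2 : ∀ x, (∫ y, g x * W x y * f y ∂muI) = g x * Tk W f x := by
    intro x
    rw [Tk_eq, ← integral_const_mul]
    congr 1; funext y; ring
  rw [e1, ← swapI (F := fun x y => g x * W x y * f y)
    ((hg.comp measurable_fst).mul hW |>.mul (hf.comp measurable_snd))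
    (C := C₁ * M * C₂) ?_]
  · exact integral_congr_ae (Eventually.of_forall fun x => e2 x)
  · intro x hx y hy
    rw [abs_mul, abs_mul]
    refine mul_le_mul (mul_le_mul (hgC x hx) ?_ (abs_nonneg _) hC₁) (hfC y hy) (abs_nonneg _)
      (mul_nonneg hC₁ (M_nonneg hWM))
    rw [abs_of_nonneg (hWM x hx y hy).1]; exact (hWM x hx y hy).2

lemma Sa_step (hW : Measurable (uncurry W))
    (hWM : ∀ x ∈ Icc (0:ℝ) 1, ∀ y ∈ Icc (0:ℝ) 1, W x y ∈ Icc (0:ℝ) M)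
    (hWrow : ∀ x ∈ Icc (0:ℝ) 1, (∫ y, W x y ∂muI) = 1)
    {g : ℝ → ℝ} (hg : Measurable g) (hgb : ∀ x ∈ Icc (0:ℝ) 1, g x ∈ Icc (0:ℝ) (max 1 M))
    (hgint : (∫ x, g x ∂muI) = 1) :
    (∀ y ∈ Icc (0:ℝ) 1, Sa W g y ∈ Icc (0:ℝ) (max 1 M)) ∧ (∫ y, Sa W g y ∂muI) = 1 := by
  have hgb' : ∀ x ∈ Icc (0:ℝ) 1, |g x| ≤ max 1 M :=
    fun x hx => by rw [abs_of_nonneg (hgb x hx).1]; exact (hgb x hx).2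
  have hintprod : ∀ y ∈ Icc (0:ℝ) 1, Integrable (fun x => g x * W x y) muI := by
    intro y hy
    refine intg (C := max 1 M * M) (hg.mul (measW2 hW y)) (fun x hx => ?_)
    rw [abs_mul]
    refine mul_le_mul (hgb' x hx) ?_ (abs_nonneg _) (le_trans zero_le_one (le_max_left _ _))
    rw [abs_of_nonneg (hWM x hx y hy).1]; exact (hWM x hx y hy).2
  constructor
  · intro y hy
    constructor
    · refine integral_nonneg_of_ae ?_
      filter_upwards [ae_memI] with x hx
      exact mul_nonneg (hgb x hx).1 (hWM x hx y hy).1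
    · have : (∫ x, g x * W x y ∂muI) ≤ ∫ x, g x * M ∂muI := by
        refine integral_mono_ae (hintprod y hy) ((intg hg hgb').mul_const M) ?_
        filter_upwards [ae_memI] with x hx
        exact mul_le_mul_of_nonneg_left (hWM x hx y hy).2 (hgb x hx).1
      rw [integral_mul_const, hgint, one_mul] at this
      exact le_trans this (le_max_right _ _)
  · have hswap := swapI (F := fun x y => g x * W x y)
      ((hg.comp measurable_fst).mul hW) (C := max 1 M * M) (fun x hx y hy => by
        rw [abs_mul]
        refine mul_le_mul (hgb' x hx) ?_ (abs_nonneg _)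
          (le_trans zero_le_one (le_max_left _ _))
        rw [abs_of_nonneg (hWM x hx y hy).1]; exact (hWM x hx y hy).2)
    have : (∫ y, Sa W g y ∂muI) = ∫ x, ∫ y, g x * W x y ∂muI ∂muI := (hswap).symm
    rw [this, ← hgint]
    refine integral_congr_ae ?_
    filter_upwards [ae_memI] with x hx
    rw [integral_const_mul, hWrow x hx, mul_one]

noncomputable def hfun (W : ℝ → ℝ → ℝ) : ℕ → ℝ → ℝ := fun t => (Sa W)^[t] (fun _ => 1)

lemma hfun_prop (hW : Measurable (uncurry W))
    (hWM : ∀ x ∈ Icc (0:ℝ) 1, ∀ y ∈ Icc (0:ℝ) 1, W x y ∈ Icc (0:ℝ) M)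
    (hWrow : ∀ x ∈ Icc (0:ℝ) 1, (∫ y, W x y ∂muI) = 1) :
    ∀ t, Measurable (hfun W t) ∧ (∀ y ∈ Icc (0:ℝ) 1, hfun W t y ∈ Icc (0:ℝ) (max 1 M)) ∧
      (∫ y, hfun W t y ∂muI) = 1 := by
  intro t
  induction t with
  | zero =>
    refine ⟨measurable_const, fun y _ => ⟨zero_le_one, le_max_left _ _⟩, by
      simp [hfun]⟩
  | succ t ih =>
    have he : hfun W (t+1) = Sa W (hfun W t) := Function.iterate_succ_apply' _ _ _
    rw [he]
    obtain ⟨h1, h2⟩ := Sa_step hW hWM hWrow ih.1 ih.2.1 ih.2.2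
    exact ⟨Sa_meas hW ih.1, h1, h2⟩

lemma dual_iter (hW : Measurable (uncurry W))
    (hWM : ∀ x ∈ Icc (0:ℝ) 1, ∀ y ∈ Icc (0:ℝ) 1, W x y ∈ Icc (0:ℝ) M)
    (hWrow : ∀ x ∈ Icc (0:ℝ) 1, (∫ y, W x y ∂muI) = 1)
    {f : ℝ → ℝ} (hf : Measurable f) (hfb : ∀ x ∈ Icc (0:ℝ) 1, f x ∈ Icc (-1:ℝ) 1) :
    ∀ t, ∀ {g : ℝ → ℝ} {C₁ : ℝ}, Measurable g → (∀ x ∈ Icc (0:ℝ) 1, |g x| ≤ C₁) →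
      (∫ y, (Sa W)^[t] g y * f y ∂muI) = ∫ x, g x * (Tk W)^[t] f x ∂muI := by
  intro t
  induction t with
  | zero => intro g C₁ _ _; rfl
  | succ t ih =>
    intro g C₁ hg hgC
    rw [Function.iterate_succ_apply]
    rw [ih (Sa_meas hW hg) (Sa_bound hW hWM hg hgC)]
    have hTt := Tk_iter hW hWM hWrow hf hfb t
    have := dual_one hW hWM hg hgC hTt.1
      (fun x hx => abs_le.2 ⟨(hTt.2 x hx).1, (hTt.2 x hx).2⟩)
    rw [this, Function.iterate_succ_apply']

lemma d_facts (hγ : 0 < γ) (hγ1 : γ ≤ 1) (hW : Measurable (uncurry W))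
    (hWM : ∀ x ∈ Icc (0:ℝ) 1, ∀ y ∈ Icc (0:ℝ) 1, W x y ∈ Icc (0:ℝ) M)
    (hmix : ∀ x ∈ Icc (0:ℝ) 1, ∀ y ∈ Icc (0:ℝ) 1, γ ≤ W x y)
    (hWrow : ∀ x ∈ Icc (0:ℝ) 1, (∫ y, W x y ∂muI) = 1) :
    ∀ t, ∀ y ∈ Icc (0:ℝ) 1, |hfun W (t+1) y - hfun W t y| ≤
      (2 * max 1 M + 2 * M * (2 * max 1 M)) * (1 - γ/2) ^ t := by
  have hM := M_nonneg hWM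
  set Cd : ℝ := 2 * max 1 M with hCd
  set ρ : ℝ := 1 - γ/2 with hρ
  have hρ0 : 0 ≤ ρ := by rw [hρ]; linarith
  have hρh : 1/2 ≤ ρ := by rw [hρ]; linarith
  have hCd0 : 0 ≤ Cd := by rw [hCd]; positivity
  have hone : (1:ℝ) ≤ max 1 M := le_max_left _ _
  -- shifted kernel
  set W' : ℝ → ℝ → ℝ := fun x y => W x y - γ/2 with hW'def
  have hW' : Measurable (uncurry W') := by
    have : uncurry W' = fun p : ℝ × ℝ => uncurry W p - γ/2 := rfl
    rw [this]; exact hW.sub measurable_const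
  have hWM' : ∀ x ∈ Icc (0:ℝ) 1, ∀ y ∈ Icc (0:ℝ) 1, W' x y ∈ Icc (0:ℝ) M := by
    intro x hx y hy
    have h1 := (hWM x hx y hy).1; have h2 := (hWM x hx y hy).2
    have h3 := hmix x hx y hy
    exact ⟨by simp only [hW'def]; linarith, by simp only [hW'def]; linarith⟩
  have hprop := hfun_prop hW hWM hWrow
  -- basic facts about d
  set d : ℕ → ℝ → ℝ := fun t y => hfun W (t+1) y - hfun W t y with hd
  have d_meas : ∀ t, Measurable (d t) := fun t => (hprop (t+1)).1.sub (hprop t).1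
  have d_bdd : ∀ t, ∀ y ∈ Icc (0:ℝ) 1, |d t y| ≤ Cd := by
    intro t y hy
    have h1 := (hprop (t+1)).2.1 y hy; have h2 := (hprop t).2.1 y hy
    rw [hd, hCd]
    rcases abs_cases (hfun W (t+1) y - hfun W t y) with ⟨he,_⟩|⟨he,_⟩ <;>
      simp only [he] <;> [skip; skip] <;>
      · have := h1.1; have := h1.2; have := h2.1; have := h2.2; linarith
  have d_intg : ∀ t, Integrable (d t) muI := fun t => intg (d_meas t) (d_bdd t)
  have d_int0 : ∀ t, (∫ y, d t y ∂muI) = 0 := by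
    intro t
    have : (∫ y, d t y ∂muI) = (∫ y, hfun W (t+1) y ∂muI) - ∫ y, hfun W t y ∂muI :=
      integral_sub (intg (hprop (t+1)).1 (fun y hy => by
        rw [abs_of_nonneg ((hprop (t+1)).2.1 y hy).1]; exact ((hprop (t+1)).2.1 y hy).2))
        (intg (hprop t).1 (fun y hy => by
        rw [abs_of_nonneg ((hprop t).2.1 y hy).1]; exact ((hprop t).2.1 y hy).2))
    rw [this, (hprop (t+1)).2.2, (hprop t).2.2, sub_self]
  -- recursion
  have d_rec : ∀ t, ∀ y ∈ Icc (0:ℝ) 1, d (t+1) y = ∫ x, d t x * W' x y ∂muI := by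
    intro t y hy
    have e1 : d (t+1) y = Sa W (hfun W (t+1)) y - Sa W (hfun W t) y := by
      have a1 : hfun W (t+2) = Sa W (hfun W (t+1)) := Function.iterate_succ_apply' _ _ _
      have a2 : hfun W (t+1) = Sa W (hfun W t) := Function.iterate_succ_apply' _ _ _
      show hfun W (t+2) y - hfun W (t+1) y = _
      rw [a1]; nth_rewrite 2 [a2]; rfl
    have hint : ∀ s : ℕ, Integrable (fun x => hfun W s x * W x y) muI := by
      intro s
      refine intg (C := max 1 M * M) ((hprop s).1.mul (measW2 hW y)) (fun x hx => ?_)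
      rw [abs_mul]
      refine mul_le_mul ?_ ?_ (abs_nonneg _) (by linarith)
      · rw [abs_of_nonneg ((hprop s).2.1 x hx).1]; exact ((hprop s).2.1 x hx).2
      · rw [abs_of_nonneg (hWM x hx y hy).1]; exact (hWM x hx y hy).2
    have e2 : d (t+1) y = ∫ x, d t x * W x y ∂muI := by
      rw [e1, Sa, Sa, ← integral_sub (hint (t+1)) (hint t)]
      congr 1; funext x; rw [hd]; ring
    have hint1 : Integrable (fun x => d t x * W' x y) muI := by
      refine intg (C := Cd * M) ((d_meas t).mul ((measW2 hW y).sub measurable_const))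
        (fun x hx => ?_)
      rw [abs_mul]
      refine mul_le_mul (d_bdd t x hx) ?_ (abs_nonneg _) hCd0
      rw [abs_of_nonneg (hWM' x hx y hy).1]; exact (hWM' x hx y hy).2
    have hint2 : Integrable (fun x => d t x * (γ/2)) muI := (d_intg t).mul_const _
    rw [e2]
    have : (fun x => d t x * W x y) = fun x => d t x * W' x y + d t x * (γ/2) := by
      funext x; simp only [hW'def]; ring
    rw [this, integral_add hint1 hint2, integral_mul_const, d_int0, zero_mul, add_zero]
  -- pointwise domination by integral of abs
  have d_abs : ∀ t, ∀ y ∈ Icc (0:ℝ) 1,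
      |d (t+1) y| ≤ ∫ x, |d t x| * W' x y ∂muI := by
    intro t y hy
    rw [d_rec t y hy]
    have h1 : |∫ x, d t x * W' x y ∂muI| ≤ ∫ x, |d t x * W' x y| ∂muI := by
      simpa only [Real.norm_eq_abs] using
        norm_integral_le_integral_norm (μ := muI) (fun x => d t x * W' x y)
    refine le_trans h1 (le_of_eq (integral_congr_ae ?_))
    filter_upwards [ae_memI] with x hx
    rw [abs_mul, abs_of_nonneg (hWM' x hx y hy).1]
  -- L1 contraction
  set e : ℕ → ℝ := fun t => ∫ y, |d t y| ∂muI with he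
  have e_nonneg : ∀ t, 0 ≤ e t := fun t => integral_nonneg (fun y => abs_nonneg _)
  have e_contr : ∀ t, e (t+1) ≤ ρ * e t := by
    intro t
    have habs_b : ∀ x ∈ Icc (0:ℝ) 1, |(fun z => |d t z|) x| ≤ Cd := fun x hx => by
      simp only [abs_abs]; exact d_bdd t x hx
    have step1 : e (t+1) ≤ ∫ y, (∫ x, |d t x| * W' x y ∂muI) ∂muI := by
      refine integral_mono_ae ((d_intg (t+1)).abs) ?_ ?_
      · refine intg (C := Cd * M) ?_ (fun y hy => ?_)
        · exact Sa_meas hW' (d_meas t).abs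
        · exact Sa_bound hW' hWM' (d_meas t).abs habs_b y hy
      · filter_upwards [ae_memI] with y hy
        exact d_abs t y hy
    have hswap := swapI (F := fun x y => |d t x| * W' x y)
      (((d_meas t).abs.comp measurable_fst).mul hW') (C := Cd * M) (fun x hx y hy => by
        rw [abs_mul, abs_abs, abs_of_nonneg (hWM' x hx y hy).1]
        exact mul_le_mul (d_bdd t x hx) (hWM' x hx y hy).2 (hWM' x hx y hy).1 hCd0)
    have step2 : (∫ y, (∫ x, |d t x| * W' x y ∂muI) ∂muI) = ∫ x, |d t x| * ρ ∂muI := by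
      rw [← hswap]
      refine integral_congr_ae ?_
      filter_upwards [ae_memI] with x hx
      rw [integral_const_mul]
      have : (∫ y, W' x y ∂muI) = ρ := by
        have : (∫ y, W' x y ∂muI) = (∫ y, W x y ∂muI) - ∫ _y, (γ/2 : ℝ) ∂muI :=
          integral_sub (intgW hW hWM hx) (integrable_const _)
        rw [this, hWrow x hx, integral_const]
        simp [hρ]
      rw [this]
    have hfin := step1.trans (le_of_eq step2)
    rw [integral_mul_const] at hfin
    calc e (t+1) ≤ (∫ y, |d t y| ∂muI) * ρ := hfin
      _ = ρ * e t := mul_comm _ _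
  have e_geo : ∀ t, e t ≤ Cd * ρ ^ t := by
    intro t
    induction t with
    | zero =>
      rw [pow_zero, mul_one, he]
      have : (∫ y, |d 0 y| ∂muI) ≤ ∫ _y, Cd ∂muI := by
        refine integral_mono_ae ((d_intg 0).abs) (integrable_const _) ?_
        filter_upwards [ae_memI] with y hy
        exact d_bdd 0 y hy
      simpa using this
    | succ t ih =>
      calc e (t+1) ≤ ρ * e t := e_contr t
        _ ≤ ρ * (Cd * ρ ^ t) := by nlinarith
        _ = Cd * ρ ^ (t+1) := by ring
  -- final pointwise bound
  intro t y hy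
  cases t with
  | zero =>
    rw [pow_zero, mul_one]
    refine le_trans (d_bdd 0 y hy) ?_
    nlinarith
  | succ t =>
    show |d (t+1) y| ≤ _
    have h1 := d_abs t y hy
    have h2 : (∫ x, |d t x| * W' x y ∂muI) ≤ ∫ x, |d t x| * M ∂muI := by
      refine integral_mono_ae ?_ ((d_intg t).abs.mul_const M) ?_
      · refine intg (C := Cd * M) (((d_meas t).abs).mul ((measW2 hW' y))) (fun x hx => ?_)
        rw [abs_mul, abs_abs, abs_of_nonneg (hWM' x hx y hy).1]
        exact mul_le_mul (d_bdd t x hx) (hWM' x hx y hy).2 (hWM' x hx y hy).1 hCd0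
      · filter_upwards [ae_memI] with x hx
        exact mul_le_mul_of_nonneg_left (hWM' x hx y hy).2 (abs_nonneg _)
    rw [integral_mul_const] at h2
    have h3 : e t * M ≤ Cd * ρ ^ t * M := mul_le_mul_of_nonneg_right (e_geo t) hM
    have hpow : (0:ℝ) ≤ ρ ^ t := pow_nonneg hρ0 t
    have h2ρ : (0:ℝ) ≤ 2*ρ-1 := by rw [hρ]; linarith
    calc |d (t+1) y| ≤ e t * M := le_trans h1 h2
      _ ≤ Cd * ρ ^ t * M := h3
      _ ≤ (Cd + 2 * M * Cd) * ρ ^ (t+1) := by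
          rw [pow_succ]
          nlinarith [mul_nonneg (mul_nonneg (mul_nonneg hM hCd0) hpow) h2ρ,
            mul_nonneg (mul_nonneg hCd0 hρ0) hpow]

end
end Stmt13

open Stmt13 Filter Topology Function in
theorem stmt_13 (M γ : ℝ) (W : ℝ → ℝ → ℝ)
    (hγ : 0 < γ)
    (hWmeas : Measurable (Function.uncurry W))
    (hWbdd : ∀ x ∈ Icc (0:ℝ) 1, ∀ y ∈ Icc (0:ℝ) 1, W x y ∈ Icc (0:ℝ) M)
    (hmix : ∀ x ∈ Icc (0:ℝ) 1, ∀ y ∈ Icc (0:ℝ) 1, γ ≤ W x y)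
    (hWrow : ∀ x ∈ Icc (0:ℝ) 1, (∫ y in Icc (0:ℝ) 1, W x y) = 1) :
    ∃ (h : ℝ → ℝ) (α ρ : ℝ), Measurable h ∧ (∀ y ∈ Icc (0:ℝ) 1, 0 ≤ h y) ∧
      (∫ y in Icc (0:ℝ) 1, h y) = 1 ∧ 0 ≤ α ∧ ρ ∈ Ico (0:ℝ) 1 ∧
      ∀ f₀ : ℝ → ℝ, Measurable f₀ → (∀ x ∈ Icc (0:ℝ) 1, f₀ x ∈ Icc (-1:ℝ) 1) →
        ∀ t : ℕ, ∀ x ∈ Icc (0:ℝ) 1,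
          |(Tk W)^[t] f₀ x - ∫ y in Icc (0:ℝ) 1, h y * f₀ y| ≤ α * ρ ^ t := by
  have hWrow' : ∀ x ∈ Icc (0:ℝ) 1, (∫ y, W x y ∂muI) = 1 := hWrow
  have hγ1 : γ ≤ 1 := gamma_le_one hWmeas hWbdd hmix hWrow'
  have hM : 0 ≤ M := M_nonneg hWbdd
  obtain ⟨ρ, hρdef⟩ : ∃ ρ : ℝ, ρ = 1 - γ/2 := ⟨_, rfl⟩
  have hρ0 : 0 ≤ ρ := by rw [hρdef]; linarith
  have hρ1 : ρ < 1 := by rw [hρdef]; linarith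
  set K : ℝ := 2 * max 1 M + 2 * M * (2 * max 1 M) with hKdef
  have hK0 : 0 ≤ K := by
    have : (1:ℝ) ≤ max 1 M := le_max_left _ _
    rw [hKdef]; positivity
  have hprop := hfun_prop (M := M) hWmeas hWbdd hWrow'
  have hdfact := d_facts hγ hγ1 hWmeas hWbdd hmix hWrow'
  -- indicator versions
  set dd : ℕ → ℝ → ℝ :=
    fun t => (Icc (0:ℝ) 1).indicator (fun y => hfun W (t+1) y - hfun W t y) with hdd
  have hddb : ∀ t y, |dd t y| ≤ K * ρ ^ t := by
    intro t y
    by_cases hy : y ∈ Icc (0:ℝ) 1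
    · rw [hdd]
      simp only [Set.indicator_of_mem hy]
      rw [hρdef]
      exact hdfact t y hy
    · rw [hdd]
      simp only [Set.indicator_of_notMem hy, abs_zero]
      exact mul_nonneg hK0 (pow_nonneg hρ0 t)
  have hsum : ∀ y, Summable (fun t => dd t y) := by
    intro y
    refine Summable.of_abs (Summable.of_nonneg_of_le (fun t => abs_nonneg _) (hddb · y) ?_)
    exact (summable_geometric_of_lt_one hρ0 hρ1).mul_left K
  set h : ℝ → ℝ :=
    fun y => (Icc (0:ℝ) 1).indicator (fun _ => (1:ℝ)) y + ∑' t, dd t y with hhdef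
  have htel : ∀ T y, (Icc (0:ℝ) 1).indicator (hfun W T) y =
      (Icc (0:ℝ) 1).indicator (fun _ => (1:ℝ)) y + ∑ t ∈ Finset.range T, dd t y := by
    intro T y
    by_cases hy : y ∈ Icc (0:ℝ) 1
    · simp only [hdd, Set.indicator_of_mem hy]
      rw [Finset.sum_range_sub (f := fun t => hfun W t y)]
      have : hfun W 0 y = 1 := rfl
      rw [this]; ring
    · simp only [hdd, Set.indicator_of_notMem hy]
      simp
  have htend : ∀ y, Tendsto (fun T => (Icc (0:ℝ) 1).indicator (hfun W T) y)
      atTop (𝓝 (h y)) := by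
    intro y
    have : (fun T => (Icc (0:ℝ) 1).indicator (hfun W T) y) =
        fun T => (Icc (0:ℝ) 1).indicator (fun _ => (1:ℝ)) y + ∑ t ∈ Finset.range T, dd t y :=
      funext (fun T => htel T y)
    rw [this, hhdef]
    exact tendsto_const_nhds.add (hsum y).hasSum.tendsto_sum_nat
  have htendI : ∀ y ∈ Icc (0:ℝ) 1, Tendsto (fun T => hfun W T y) atTop (𝓝 (h y)) := by
    intro y hy
    have := htend y
    simpa only [Set.indicator_of_mem hy] using this
  have hmeas : Measurable h := by
    refine measurable_of_tendsto_metrizable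
      (f := fun T => (Icc (0:ℝ) 1).indicator (hfun W T))
      (fun T => ((hprop T).1).indicator measurableSet_Icc) ?_
    rw [tendsto_pi_nhds]
    exact htend
  have hnonneg : ∀ y ∈ Icc (0:ℝ) 1, 0 ≤ h y := by
    intro y hy
    exact ge_of_tendsto (htendI y hy) (Eventually.of_forall (fun T => ((hprop T).2.1 y hy).1))
  have hint1 : (∫ y, h y ∂muI) = 1 := by
    have hDCT : Tendsto (fun T => ∫ y, hfun W T y ∂muI) atTop (𝓝 (∫ y, h y ∂muI)) := by
      refine tendsto_integral_of_dominated_convergence (fun _ => max 1 M)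
        (fun T => (hprop T).1.aestronglyMeasurable) (integrable_const _) ?_ ?_
      · intro T
        filter_upwards [ae_memI] with y hy
        rw [Real.norm_eq_abs, abs_of_nonneg ((hprop T).2.1 y hy).1]
        exact ((hprop T).2.1 y hy).2
      · filter_upwards [ae_memI] with y hy
        exact htendI y hy
    have h1 : (fun T => ∫ y, hfun W T y ∂muI) = fun _ => (1:ℝ) :=
      funext (fun T => (hprop T).2.2)
    rw [h1] at hDCT
    exact tendsto_nhds_unique hDCT tendsto_const_nhds
  refine ⟨h, 2, ρ, hmeas, hnonneg, hint1, by norm_num, ⟨hρ0, hρ1⟩, ?_⟩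
  intro f₀ hf₀m hf₀b
  have hiter := Tk_iter hWmeas hWbdd hWrow' hf₀m hf₀b
  have hf₀abs : ∀ x ∈ Icc (0:ℝ) 1, |f₀ x| ≤ 1 :=
    fun x hx => abs_le.2 ⟨(hf₀b x hx).1, (hf₀b x hx).2⟩
  have hiterabs : ∀ t, ∀ x ∈ Icc (0:ℝ) 1, |(Tk W)^[t] f₀ x| ≤ 1 :=
    fun t x hx => abs_le.2 ⟨((hiter t).2 x hx).1, ((hiter t).2 x hx).2⟩
  -- sup/inf sequences
  set m : ℕ → ℝ := fun t => sInf ((Tk W)^[t] f₀ '' Icc (0:ℝ) 1) with hmdef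
  set s : ℕ → ℝ := fun t => sSup ((Tk W)^[t] f₀ '' Icc (0:ℝ) 1) with hsdef
  have hne : ∀ t, ((Tk W)^[t] f₀ '' Icc (0:ℝ) 1).Nonempty :=
    fun t => ⟨(Tk W)^[t] f₀ 0, ⟨0, zero_memI, rfl⟩⟩
  have hba : ∀ t, BddAbove ((Tk W)^[t] f₀ '' Icc (0:ℝ) 1) :=
    fun t => ⟨1, by rintro _ ⟨y, hy, rfl⟩; exact ((hiter t).2 y hy).2⟩
  have hbb : ∀ t, BddBelow ((Tk W)^[t] f₀ '' Icc (0:ℝ) 1) :=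
    fun t => ⟨-1, by rintro _ ⟨y, hy, rfl⟩; exact ((hiter t).2 y hy).1⟩
  have hmle : ∀ t, ∀ x ∈ Icc (0:ℝ) 1, m t ≤ (Tk W)^[t] f₀ x :=
    fun t x hx => csInf_le (hbb t) ⟨x, hx, rfl⟩
  have hsle : ∀ t, ∀ x ∈ Icc (0:ℝ) 1, (Tk W)^[t] f₀ x ≤ s t :=
    fun t x hx => le_csSup (hba t) ⟨x, hx, rfl⟩
  have hm1 : ∀ t, -1 ≤ m t :=
    fun t => le_csInf (hne t) (by rintro _ ⟨y, hy, rfl⟩; exact ((hiter t).2 y hy).1)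
  have hs1 : ∀ t, s t ≤ 1 :=
    fun t => csSup_le (hne t) (by rintro _ ⟨y, hy, rfl⟩; exact ((hiter t).2 y hy).2)
  have hms : ∀ t, m t ≤ s t := fun t => le_trans (hmle t 0 zero_memI) (hsle t 0 zero_memI)
  set A : ℕ → ℝ := fun t => ∫ z, (Tk W)^[t] f₀ z ∂muI with hAdef
  have hAmem : ∀ t, m t ≤ A t ∧ A t ≤ s t := by
    intro t
    constructor
    · have : (∫ _z, m t ∂muI) ≤ ∫ z, (Tk W)^[t] f₀ z ∂muI := by
        refine integral_mono_ae (integrable_const _) (intg (hiter t).1 (hiterabs t)) ?_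
        filter_upwards [ae_memI] with z hz
        exact hmle t z hz
      simpa using this
    · have : (∫ z, (Tk W)^[t] f₀ z ∂muI) ≤ ∫ _z, s t ∂muI := by
        refine integral_mono_ae (intg (hiter t).1 (hiterabs t)) (integrable_const _) ?_
        filter_upwards [ae_memI] with z hz
        exact hsle t z hz
      simpa using this
  have hstep_up : ∀ t, s (t+1) ≤ (γ/2) * A t + ρ * s t := by
    intro t
    refine csSup_le (hne (t+1)) ?_
    rintro _ ⟨x, hx, rfl⟩
    have he : (Tk W)^[t+1] f₀ x = Tk W ((Tk W)^[t] f₀) x := by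
      rw [Function.iterate_succ_apply']
    rw [he, hρdef]
    exact Tk_upper hγ hWmeas hWbdd hmix hWrow' (hiter t).1 (hiter t).2 x hx
  have hstep_lo : ∀ t, (γ/2) * A t + ρ * m t ≤ m (t+1) := by
    intro t
    refine le_csInf (hne (t+1)) ?_
    rintro _ ⟨x, hx, rfl⟩
    have he : (Tk W)^[t+1] f₀ x = Tk W ((Tk W)^[t] f₀) x := by
      rw [Function.iterate_succ_apply']
    rw [he, hρdef]
    exact Tk_lower hγ hWmeas hWbdd hmix hWrow' (hiter t).1 (hiter t).2 x hx
  have hmono_m : Monotone m := by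
    refine monotone_nat_of_le_succ (fun t => ?_)
    have h1 := hstep_lo t
    have h2 := (hAmem t).1
    have : (γ/2) * m t + ρ * m t ≤ (γ/2) * A t + ρ * m t := by
      have := mul_le_mul_of_nonneg_left h2 (by linarith : (0:ℝ) ≤ γ/2)
      linarith
    have h3 : (γ/2) * m t + ρ * m t = m t := by rw [hρdef]; ring
    linarith
  have hanti_s : Antitone s := by
    refine antitone_nat_of_succ_le (fun t => ?_)
    have h1 := hstep_up t
    have h2 := (hAmem t).2
    have : (γ/2) * A t + ρ * s t ≤ (γ/2) * s t + ρ * s t := by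
      have := mul_le_mul_of_nonneg_left h2 (by linarith : (0:ℝ) ≤ γ/2)
      linarith
    have h3 : (γ/2) * s t + ρ * s t = s t := by rw [hρdef]; ring
    linarith
  have hosc : ∀ t, s t - m t ≤ 2 * ρ ^ t := by
    intro t
    induction t with
    | zero => simp only [pow_zero, mul_one]; linarith [hm1 0, hs1 0]
    | succ t ih =>
      have h1 := hstep_up t
      have h2 := hstep_lo t
      have h3 : s (t+1) - m (t+1) ≤ ρ * (s t - m t) := by
        have e := mul_sub ρ (s t) (m t)
        linarith
      calc s (t+1) - m (t+1) ≤ ρ * (s t - m t) := h3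
        _ ≤ ρ * (2 * ρ ^ t) := mul_le_mul_of_nonneg_left ih hρ0
        _ = 2 * ρ ^ (t+1) := by ring
  set c : ℝ := ⨆ t, m t with hcdef
  have hbr : BddAbove (Set.range m) := by
    refine ⟨1, ?_⟩
    rintro _ ⟨t, rfl⟩
    exact le_trans (hms t) (hs1 t)
  have hc1 : ∀ t, m t ≤ c := fun t => le_ciSup hbr t
  have hc2 : ∀ t, c ≤ s t := by
    intro t
    refine ciSup_le (fun u => ?_)
    rcases le_total u t with hut | hut
    · exact le_trans (hmono_m hut) (hms t)
    · exact le_trans (hms u) (hanti_s hut)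
  have hcore : ∀ t, ∀ x ∈ Icc (0:ℝ) 1, |(Tk W)^[t] f₀ x - c| ≤ 2 * ρ ^ t := by
    intro t x hx
    have h1 := hmle t x hx; have h2 := hsle t x hx
    have h3 := hc1 t; have h4 := hc2 t; have h5 := hosc t
    exact abs_le.2 ⟨by linarith, by linarith⟩
  have hAc : ∀ t, |A t - c| ≤ 2 * ρ ^ t := by
    intro t
    have h1 := (hAmem t).1; have h2 := (hAmem t).2
    have h3 := hc1 t; have h4 := hc2 t; have h5 := hosc t
    exact abs_le.2 ⟨by linarith, by linarith⟩
  have hAtend : Tendsto A atTop (𝓝 c) := by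
    rw [tendsto_iff_dist_tendsto_zero]
    have hgeo : Tendsto (fun t : ℕ => 2 * ρ ^ t) atTop (𝓝 0) := by
      have := (tendsto_pow_atTop_nhds_zero_of_lt_one hρ0 hρ1).const_mul (2:ℝ)
      simpa using this
    refine squeeze_zero (fun t => dist_nonneg) (fun t => ?_) hgeo
    rw [Real.dist_eq]
    exact hAc t
  have hdual : ∀ T, (∫ y, hfun W T y * f₀ y ∂muI) = A T := by
    intro T
    have h1 := dual_iter hWmeas hWbdd hWrow' hf₀m hf₀b T
      (g := fun _ => (1:ℝ)) (C₁ := 1) measurable_const (fun x _ => by norm_num)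
    have h2 : (∫ y, (Sa W)^[T] (fun _ => (1:ℝ)) y * f₀ y ∂muI) =
        ∫ y, hfun W T y * f₀ y ∂muI := rfl
    rw [h2] at h1
    rw [h1, hAdef]
    simp
  have hDCT2 : Tendsto (fun T => ∫ y, hfun W T y * f₀ y ∂muI) atTop
      (𝓝 (∫ y, h y * f₀ y ∂muI)) := by
    refine tendsto_integral_of_dominated_convergence (fun _ => max 1 M)
      (fun T => ((hprop T).1.mul hf₀m).aestronglyMeasurable) (integrable_const _) ?_ ?_
    · intro T
      filter_upwards [ae_memI] with y hy
      rw [Real.norm_eq_abs, abs_mul]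
      calc |hfun W T y| * |f₀ y| ≤ max 1 M * 1 := by
            refine mul_le_mul ?_ (hf₀abs y hy) (abs_nonneg _) ?_
            · rw [abs_of_nonneg ((hprop T).2.1 y hy).1]; exact ((hprop T).2.1 y hy).2
            · exact le_trans zero_le_one (le_max_left _ _)
        _ = max 1 M := mul_one _
    · filter_upwards [ae_memI] with y hy
      exact (htendI y hy).mul_const (f₀ y)
  have hconsensus : (∫ y, h y * f₀ y ∂muI) = c := by
    have : (fun T => ∫ y, hfun W T y * f₀ y ∂muI) = A := funext hdual
    rw [this] at hDCT2
    exact tendsto_nhds_unique hDCT2 hAtend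
  intro t x hx
  show |(Tk W)^[t] f₀ x - ∫ y, h y * f₀ y ∂muI| ≤ 2 * ρ ^ t
  rw [hconsensus]
  exact hcore t x hx
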